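/- Let q be an odd prime with q ≡ 3 (mod 4), r an odd prime with r mod 2q ∈ D_0^{(2q)}, n = ord_{2q}(r), and η a primitive 2q-th root of unity in 𝔽_{r^n}. Then for all i, j ∈ {0,1}, the reciprocal polynomial of g_{E_i}^{(2q)} equals g_{E_{(i+1) mod 2}}^{(2q)}, and the reciprocal polynomial of g_{D_i}^{(2q)}(x)·g_{E_j}^{(2q)}(x) equals g_{D_{(i+1) mod 2}}^{(2q)}(x)·g_{E_{(j+1) mod 2}}^{(2q)}(x). -/

import Mathlib

open Polynomial

/-- The cyclotomic class `D_i^{(2q)} = {g^(2s+i) mod 2q : 0 ≤ s < (q-1)/2}`. -/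
def Dcl (q g i : ℕ) : Finset ℕ :=
  (Finset.range ((q - 1) / 2)).image fun s => g ^ (2 * s + i) % (2 * q)

/-- The cyclotomic class `E_i^{(2q)} = {2u mod 2q : u ∈ D_i^{(2q)}}`. -/
def Ecl (q g i : ℕ) : Finset ℕ :=
  (Dcl q g i).image fun u => 2 * u % (2 * q)

/-- The `r`-cyclotomic coset modulo `2q` containing `t`: `{t·r^i mod 2q : i ∈ ℕ}`. -/
def Ccoset (q r t : ℕ) : Set ℕ := {x | ∃ i : ℕ, x = t * r ^ i % (2 * q)}

/-- `g_{D_i}^{(2q)}(x) = ∏_{j ∈ D_i^{(2q)}} (x - η^j)`. -/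
noncomputable def gDpoly (F : Type) [Field F] (q g i : ℕ) (η : F) : F[X] :=
  ∏ j ∈ Dcl q g i, (X - C (η ^ j))

/-- `g_{E_i}^{(2q)}(x) = ∏_{j ∈ E_i^{(2q)}} (x - η^j)`. -/
noncomputable def gEpoly (F : Type) [Field F] (q g i : ℕ) (η : F) : F[X] :=
  ∏ j ∈ Ecl q g i, (X - C (η ^ j))

/-- `M_t(x) = ∏_{j ∈ C_{(t,2q)}} (x - η^j)`, the minimal polynomial of `η^t`. -/
noncomputable def Mpoly (F : Type) [Field F] (q r t : ℕ) (η : F) : F[X] :=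
  ∏ᶠ j ∈ Ccoset q r t, (X - C (η ^ j))

/-- The reciprocal polynomial `h̃(x) = h(0)⁻¹ x^{deg h} h(x⁻¹)`. -/
noncomputable def recip (F : Type) [Field F] (h : F[X]) : F[X] :=
  C (h.coeff 0)⁻¹ * h.reverse

section NumberTheory

variable {q g : ℕ}

lemma g_unit (hq3 : 3 ≤ q) (hg2q : orderOf ((g : ℕ) : ZMod (2 * q)) = q - 1) :
    IsUnit ((g : ℕ) : ZMod (2 * q)) := by
  have : IsOfFinOrder ((g : ℕ) : ZMod (2 * q)) := by
    rw [← orderOf_pos_iff, hg2q]; omega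
  exact this.isUnit

lemma neg_one_pow (hq : q.Prime) (hq4 : q % 4 = 3)
    (hgq : orderOf ((g : ℕ) : ZMod q) = q - 1)
    (hg2q : orderOf ((g : ℕ) : ZMod (2 * q)) = q - 1) :
    ((g : ℕ) : ZMod (2 * q)) ^ ((q - 1) / 2) = -1 := by
  have hq3 : 3 ≤ q := by omega
  haveI : NeZero (2 * q) := ⟨by omega⟩
  haveI : NeZero q := ⟨by omega⟩
  haveI : Fact q.Prime := ⟨hq⟩
  set c : ZMod (2 * q) := ((g : ℕ) : ZMod (2 * q)) ^ ((q - 1) / 2) with hc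
  -- g is odd
  have hunit := g_unit hq3 hg2q
  have hcop : Nat.Coprime g (2 * q) := (ZMod.isUnit_iff_coprime g (2 * q)).mp hunit
  have hgodd : Odd g := Nat.coprime_two_right.mp (Nat.Coprime.coprime_dvd_right (dvd_mul_right 2 q) hcop)
  -- mod q : c ≡ -1
  have hmodq : ((g : ℕ) : ZMod q) ^ ((q - 1) / 2) = -1 := by
    set h : ZMod q := ((g : ℕ) : ZMod q) with hh
    have hsq : h ^ ((q - 1) / 2) * h ^ ((q - 1) / 2) = 1 := by
      rw [← pow_add]
      have h2 : (q - 1) / 2 + (q - 1) / 2 = q - 1 := by omega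
      rw [h2, ← hgq, pow_orderOf_eq_one]
    rcases mul_self_eq_one_iff.mp hsq with h1 | h1
    · exfalso
      have hd := orderOf_dvd_of_pow_eq_one h1
      rw [hgq] at hd
      have := Nat.le_of_dvd (by omega) hd
      omega
    · exact h1
  have hdvdq : q ∣ c.val + 1 := by
    have hψ : ((c.val : ℕ) : ZMod q) = -1 := by
      have h1 : (ZMod.castHom (dvd_mul_left q 2) (ZMod q)) c = -1 := by
        rw [hc, map_pow, map_natCast, hmodq]
      rwa [ZMod.castHom_apply, ← ZMod.natCast_val] at h1
    have : ((c.val + 1 : ℕ) : ZMod q) = 0 := by push_cast [hψ]; ring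
    exact (ZMod.natCast_eq_zero_iff _ _).mp this
  have hdvd2 : 2 ∣ c.val + 1 := by
    have hg2 : ((g : ℕ) : ZMod 2) = 1 := by
      rw [← ZMod.natCast_mod g 2, Nat.odd_iff.mp hgodd]; norm_num
    have hψ : ((c.val : ℕ) : ZMod 2) = 1 := by
      have h1 : (ZMod.castHom (dvd_mul_right 2 q) (ZMod 2)) c = 1 := by
        rw [hc, map_pow, map_natCast, hg2, one_pow]
      rwa [ZMod.castHom_apply, ← ZMod.natCast_val] at h1
    have : ((c.val + 1 : ℕ) : ZMod 2) = 0 := by push_cast [hψ]; decide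
    exact (ZMod.natCast_eq_zero_iff _ _).mp this
  have hcop2q : Nat.Coprime 2 q := Nat.coprime_two_left.mpr ⟨(q - 3) / 2 + 1, by omega⟩
  have hdvd : 2 * q ∣ c.val + 1 := hcop2q.mul_dvd_of_dvd_of_dvd hdvd2 hdvdq
  have hlt : c.val < 2 * q := ZMod.val_lt c
  have hval : c.val = 2 * q - 1 := by
    have h1 : 2 * q ≤ c.val + 1 := Nat.le_of_dvd (by omega) hdvd
    omega
  have : c = ((2 * q - 1 : ℕ) : ZMod (2 * q)) := by
    rw [← hval, ZMod.natCast_zmod_val]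
  rw [this, Nat.cast_sub (by omega), ZMod.natCast_self]
  push_cast
  ring

lemma mem_Dcl_iff (hq3 : 3 ≤ q) (hq1 : (q - 1) % 2 = 0)
    (hg2q : orderOf ((g : ℕ) : ZMod (2 * q)) = q - 1)
    {i : ℕ} (hi : i < 2) (x : ℕ) :
    x ∈ Dcl q g i ↔
      x < 2 * q ∧ ∃ e : ℕ, e % 2 = i ∧ (x : ZMod (2 * q)) = ((g : ℕ) : ZMod (2 * q)) ^ e := by
  haveI : NeZero (2 * q) := ⟨by omega⟩
  constructor
  · intro hx
    rw [Dcl, Finset.mem_image] at hx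
    obtain ⟨s, _, rfl⟩ := hx
    refine ⟨Nat.mod_lt _ (by omega), 2 * s + i, by omega, ?_⟩
    rw [ZMod.natCast_mod, Nat.cast_pow]
  · rintro ⟨hlt, e, he, hcast⟩
    rw [Dcl, Finset.mem_image]
    set m := e % (q - 1) with hm
    have hmlt : m < q - 1 := Nat.mod_lt _ (by omega)
    have h2div : 2 ∣ (q - 1) * (e / (q - 1)) := (Nat.dvd_of_mod_eq_zero hq1).mul_right _
    obtain ⟨t, ht⟩ := h2div
    have hdm : (q - 1) * (e / (q - 1)) + m = e := Nat.div_add_mod e (q - 1)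
    have hm2 : m % 2 = i := by omega
    refine ⟨m / 2, by rw [Finset.mem_range]; omega, ?_⟩
    have h3 : 2 * (m / 2) + i = m := by omega
    have hpow : ((g : ℕ) : ZMod (2 * q)) ^ (2 * (m / 2) + i) = ((g : ℕ) : ZMod (2 * q)) ^ e := by
      rw [h3, hm, ← hg2q, pow_mod_orderOf]
    have hcast2 : ((g ^ (2 * (m / 2) + i) % (2 * q) : ℕ) : ZMod (2 * q))
        = ((x : ℕ) : ZMod (2 * q)) := by
      rw [ZMod.natCast_mod, Nat.cast_pow, hpow, hcast]
    have hv := congrArg ZMod.val hcast2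
    rwa [ZMod.val_cast_of_lt (Nat.mod_lt _ (by omega)), ZMod.val_cast_of_lt hlt] at hv

lemma mem_Ecl_iff (hq3 : 3 ≤ q) (hq1 : (q - 1) % 2 = 0)
    (hg2q : orderOf ((g : ℕ) : ZMod (2 * q)) = q - 1)
    {i : ℕ} (hi : i < 2) (x : ℕ) :
    x ∈ Ecl q g i ↔
      x < 2 * q ∧ ∃ e : ℕ, e % 2 = i ∧ (x : ZMod (2 * q)) = 2 * ((g : ℕ) : ZMod (2 * q)) ^ e := by
  haveI : NeZero (2 * q) := ⟨by omega⟩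
  constructor
  · intro hx
    rw [Ecl, Finset.mem_image] at hx
    obtain ⟨u, hu, rfl⟩ := hx
    obtain ⟨hult, e, he, hcast⟩ := (mem_Dcl_iff hq3 hq1 hg2q hi u).mp hu
    refine ⟨Nat.mod_lt _ (by omega), e, he, ?_⟩
    rw [ZMod.natCast_mod, Nat.cast_mul, hcast, Nat.cast_two]
  · rintro ⟨hlt, e, he, hcast⟩
    rw [Ecl, Finset.mem_image]
    refine ⟨g ^ e % (2 * q), (mem_Dcl_iff hq3 hq1 hg2q hi _).mpr
      ⟨Nat.mod_lt _ (by omega), e, he, by rw [ZMod.natCast_mod, Nat.cast_pow]⟩, ?_⟩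
    have hcast2 : ((2 * (g ^ e % (2 * q)) % (2 * q) : ℕ) : ZMod (2 * q))
        = (x : ZMod (2 * q)) := by
      rw [ZMod.natCast_mod, Nat.cast_mul, ZMod.natCast_mod, Nat.cast_pow, hcast, Nat.cast_two]
    have hv := congrArg ZMod.val hcast2
    rwa [ZMod.val_cast_of_lt (Nat.mod_lt _ (by omega)), ZMod.val_cast_of_lt hlt] at hv

lemma Dcl_pos (hq3 : 3 ≤ q) (hq1 : (q - 1) % 2 = 0)
    (hg2q : orderOf ((g : ℕ) : ZMod (2 * q)) = q - 1)
    {i : ℕ} (hi : i < 2) {x : ℕ} (hx : x ∈ Dcl q g i) : 0 < x := by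
  haveI : Fact (1 < 2 * q) := ⟨by omega⟩
  obtain ⟨_, e, _, hcast⟩ := (mem_Dcl_iff hq3 hq1 hg2q hi x).mp hx
  rcases Nat.eq_zero_or_pos x with rfl | h
  · exfalso
    have hu : IsUnit (((g : ℕ) : ZMod (2 * q)) ^ e) := (g_unit hq3 hg2q).pow e
    rw [Nat.cast_zero] at hcast
    exact hu.ne_zero hcast.symm
  · exact h

lemma zmod_two_ne_zero (hq3 : 3 ≤ q) : (2 : ZMod (2 * q)) ≠ 0 := by
  haveI : NeZero (2 * q) := ⟨by omega⟩
  intro h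
  have h1 : ((2 : ℕ) : ZMod (2 * q)) = 0 := by rw [Nat.cast_two]; exact h
  have h2 := (ZMod.natCast_eq_zero_iff 2 (2 * q)).mp h1
  have := Nat.le_of_dvd (by omega) h2
  omega

lemma Ecl_pos (hq3 : 3 ≤ q) (hq1 : (q - 1) % 2 = 0)
    (hg2q : orderOf ((g : ℕ) : ZMod (2 * q)) = q - 1)
    {i : ℕ} (hi : i < 2) {x : ℕ} (hx : x ∈ Ecl q g i) : 0 < x := by
  haveI : Fact (1 < 2 * q) := ⟨by omega⟩
  obtain ⟨_, e, _, hcast⟩ := (mem_Ecl_iff hq3 hq1 hg2q hi x).mp hx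
  rcases Nat.eq_zero_or_pos x with rfl | h
  · exfalso
    have hu : IsUnit (((g : ℕ) : ZMod (2 * q)) ^ e) := (g_unit hq3 hg2q).pow e
    rw [Nat.cast_zero] at hcast
    exact zmod_two_ne_zero hq3 ((hu.mul_left_eq_zero).mp hcast.symm)
  · exact h

lemma image_neg_Dcl_subset (hq : q.Prime) (hq4 : q % 4 = 3)
    (hgq : orderOf ((g : ℕ) : ZMod q) = q - 1)
    (hg2q : orderOf ((g : ℕ) : ZMod (2 * q)) = q - 1)
    {i : ℕ} (hi : i < 2) :
    (Dcl q g i).image (fun x => 2 * q - x) ⊆ Dcl q g ((i + 1) % 2) := by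
  have hq3 : 3 ≤ q := by omega
  have hq1 : (q - 1) % 2 = 0 := by omega
  haveI : NeZero (2 * q) := ⟨by omega⟩
  intro y hy
  rw [Finset.mem_image] at hy
  obtain ⟨x, hx, rfl⟩ := hy
  have hxpos := Dcl_pos hq3 hq1 hg2q hi hx
  obtain ⟨hxlt, e, he, hcast⟩ := (mem_Dcl_iff hq3 hq1 hg2q hi x).mp hx
  refine (mem_Dcl_iff hq3 hq1 hg2q (by omega) _).mpr
    ⟨by omega, e + (q - 1) / 2, by omega, ?_⟩
  rw [Nat.cast_sub (by omega), ZMod.natCast_self, zero_sub, hcast, pow_add,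
    neg_one_pow hq hq4 hgq hg2q, mul_neg_one]

lemma image_neg_Ecl_subset (hq : q.Prime) (hq4 : q % 4 = 3)
    (hgq : orderOf ((g : ℕ) : ZMod q) = q - 1)
    (hg2q : orderOf ((g : ℕ) : ZMod (2 * q)) = q - 1)
    {i : ℕ} (hi : i < 2) :
    (Ecl q g i).image (fun x => 2 * q - x) ⊆ Ecl q g ((i + 1) % 2) := by
  have hq3 : 3 ≤ q := by omega
  have hq1 : (q - 1) % 2 = 0 := by omega
  haveI : NeZero (2 * q) := ⟨by omega⟩
  intro y hy
  rw [Finset.mem_image] at hy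
  obtain ⟨x, hx, rfl⟩ := hy
  have hxpos := Ecl_pos hq3 hq1 hg2q hi hx
  obtain ⟨hxlt, e, he, hcast⟩ := (mem_Ecl_iff hq3 hq1 hg2q hi x).mp hx
  refine (mem_Ecl_iff hq3 hq1 hg2q (by omega) _).mpr
    ⟨by omega, e + (q - 1) / 2, by omega, ?_⟩
  rw [Nat.cast_sub (by omega), ZMod.natCast_self, zero_sub, hcast, pow_add,
    neg_one_pow hq hq4 hgq hg2q]
  ring

lemma image_neg_eq {A B : Finset ℕ} {N : ℕ}
    (hB : ∀ x ∈ B, 0 < x ∧ x < N)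
    (h1 : A.image (fun x => N - x) ⊆ B) (h2 : B.image (fun x => N - x) ⊆ A) :
    A.image (fun x => N - x) = B := by
  apply Finset.Subset.antisymm h1
  intro x hx
  rw [Finset.mem_image]
  refine ⟨N - x, h2 (Finset.mem_image_of_mem _ hx), ?_⟩
  have := hB x hx
  omega

end NumberTheory


section Poly

variable {F : Type} [Field F]

lemma reverse_X_sub_C' (a : F) : (X - C a).reverse = 1 - C a * X := by
  rw [Polynomial.reverse, natDegree_X_sub_C, reflect_sub, reflect_one_X, reflect_C, pow_one]

lemma reverse_prod' (S : Finset ℕ) (f : ℕ → F[X]) :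
    (∏ j ∈ S, f j).reverse = ∏ j ∈ S, (f j).reverse := by
  classical
  induction S using Finset.induction with
  | empty => simpa using reverse_C (1 : F)
  | insert _ _ hj ih => rw [Finset.prod_insert hj, Finset.prod_insert hj, reverse_mul_of_domain, ih]

lemma recip_prod (S : Finset ℕ) (a : ℕ → F)
    (ha : ∀ j ∈ S, a j ≠ 0) :
    recip F (∏ j ∈ S, (X - C (a j))) = ∏ j ∈ S, (X - C (a j)⁻¹) := by
  unfold recip
  rw [reverse_prod']
  have hc0 : (∏ j ∈ S, (X - C (a j))).coeff 0 = ∏ j ∈ S, (-(a j)) := by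
    rw [coeff_zero_eq_eval_zero, eval_prod]
    exact Finset.prod_congr rfl fun j _ => by simp
  have hfac : ∀ j ∈ S, (X - C (a j)).reverse = (-C (a j)) * (X - C (a j)⁻¹) := by
    intro j hj
    rw [reverse_X_sub_C', neg_mul, mul_sub, ← C_mul, mul_inv_cancel₀ (ha j hj), C_1]
    ring
  rw [hc0, Finset.prod_congr rfl hfac, Finset.prod_mul_distrib]
  have h1 : C (∏ j ∈ S, (-(a j))) = ∏ j ∈ S, (-C (a j) : F[X]) := by
    rw [map_prod]
    exact Finset.prod_congr rfl fun j _ => by rw [map_neg]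
  have hprod : (∏ j ∈ S, (-(a j))) ≠ 0 :=
    Finset.prod_ne_zero_iff.mpr fun j hj => neg_ne_zero.mpr (ha j hj)
  rw [← h1, ← mul_assoc, ← C_mul, inv_mul_cancel₀ hprod, C_1, one_mul]

lemma recip_mul (h k : F[X]) (hh : h.coeff 0 ≠ 0) (hk : k.coeff 0 ≠ 0) :
    recip F (h * k) = recip F h * recip F k := by
  unfold recip
  rw [reverse_mul_of_domain, mul_coeff_zero, mul_inv, C_mul]
  ring

end Poly

section Main

variable {F : Type} [Field F] {q g : ℕ}

lemma recip_gE (hq : q.Prime) (hq4 : q % 4 = 3)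
    (hgq : orderOf ((g : ℕ) : ZMod q) = q - 1)
    (hg2q : orderOf ((g : ℕ) : ZMod (2 * q)) = q - 1)
    (η : F) (hη1 : η ^ (2 * q) = 1) {i : ℕ} (hi : i < 2) :
    recip F (gEpoly F q g i η) = gEpoly F q g ((i + 1) % 2) η := by
  have hq3 : 3 ≤ q := by omega
  have hq1 : (q - 1) % 2 = 0 := by omega
  have hη0 : η ≠ 0 := by
    intro h
    rw [h, zero_pow (by omega : 2 * q ≠ 0)] at hη1
    exact one_ne_zero hη1.symm
  unfold gEpoly
  rw [recip_prod _ _ fun j _ => pow_ne_zero _ hη0]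
  have hbound : ∀ x ∈ Ecl q g i, 0 < x ∧ x < 2 * q := fun x hx =>
    ⟨Ecl_pos hq3 hq1 hg2q hi hx, ((mem_Ecl_iff hq3 hq1 hg2q hi x).mp hx).1⟩
  have hbound' : ∀ x ∈ Ecl q g ((i + 1) % 2), 0 < x ∧ x < 2 * q := fun x hx =>
    ⟨Ecl_pos hq3 hq1 hg2q (by omega) hx,
      ((mem_Ecl_iff hq3 hq1 hg2q (by omega) x).mp hx).1⟩
  have himg : (Ecl q g i).image (fun x => 2 * q - x) = Ecl q g ((i + 1) % 2) := by
    apply image_neg_eq hbound' (image_neg_Ecl_subset hq hq4 hgq hg2q hi)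
    have h2 := image_neg_Ecl_subset hq hq4 hgq hg2q (show (i + 1) % 2 < 2 by omega)
    rwa [show ((i + 1) % 2 + 1) % 2 = i by omega] at h2
  rw [← himg, Finset.prod_image ?hinj]
  case hinj =>
    intro x hx y hy hxy
    have h1 := hbound x hx
    have h2 := hbound y hy
    simp only at hxy
    omega
  apply Finset.prod_congr rfl
  intro x hx
  have hb := hbound x hx
  have hmul : η ^ (2 * q - x) * η ^ x = 1 := by
    rw [← pow_add, show 2 * q - x + x = 2 * q by omega, hη1]
  rw [inv_eq_of_mul_eq_one_left hmul]

lemma recip_gD (hq : q.Prime) (hq4 : q % 4 = 3)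
    (hgq : orderOf ((g : ℕ) : ZMod q) = q - 1)
    (hg2q : orderOf ((g : ℕ) : ZMod (2 * q)) = q - 1)
    (η : F) (hη1 : η ^ (2 * q) = 1) {i : ℕ} (hi : i < 2) :
    recip F (gDpoly F q g i η) = gDpoly F q g ((i + 1) % 2) η := by
  have hq3 : 3 ≤ q := by omega
  have hq1 : (q - 1) % 2 = 0 := by omega
  have hη0 : η ≠ 0 := by
    intro h
    rw [h, zero_pow (by omega : 2 * q ≠ 0)] at hη1
    exact one_ne_zero hη1.symm
  unfold gDpoly
  rw [recip_prod _ _ fun j _ => pow_ne_zero _ hη0]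
  have hbound : ∀ x ∈ Dcl q g i, 0 < x ∧ x < 2 * q := fun x hx =>
    ⟨Dcl_pos hq3 hq1 hg2q hi hx, ((mem_Dcl_iff hq3 hq1 hg2q hi x).mp hx).1⟩
  have hbound' : ∀ x ∈ Dcl q g ((i + 1) % 2), 0 < x ∧ x < 2 * q := fun x hx =>
    ⟨Dcl_pos hq3 hq1 hg2q (by omega) hx,
      ((mem_Dcl_iff hq3 hq1 hg2q (by omega) x).mp hx).1⟩
  have himg : (Dcl q g i).image (fun x => 2 * q - x) = Dcl q g ((i + 1) % 2) := by
    apply image_neg_eq hbound' (image_neg_Dcl_subset hq hq4 hgq hg2q hi)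
    have h2 := image_neg_Dcl_subset hq hq4 hgq hg2q (show (i + 1) % 2 < 2 by omega)
    rwa [show ((i + 1) % 2 + 1) % 2 = i by omega] at h2
  rw [← himg, Finset.prod_image ?hinj]
  case hinj =>
    intro x hx y hy hxy
    have h1 := hbound x hx
    have h2 := hbound y hy
    simp only at hxy
    omega
  apply Finset.prod_congr rfl
  intro x hx
  have hb := hbound x hx
  have hmul : η ^ (2 * q - x) * η ^ x = 1 := by
    rw [← pow_add, show 2 * q - x + x = 2 * q by omega, hη1]
  rw [inv_eq_of_mul_eq_one_left hmul]

end Main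

theorem stmt9 (q g : ℕ) (hq : q.Prime) (hodd : Odd q)
    (hgq : orderOf ((g : ℕ) : ZMod q) = q - 1)
    (hg2q : orderOf ((g : ℕ) : ZMod (2 * q)) = q - 1)
    (hq4 : q % 4 = 3)
    (r : ℕ) (hr : r.Prime) (hrodd : Odd r)
    (hrD : r % (2 * q) ∈ Dcl q g 0)
    (F : Type) [Field F] [Fintype F] [CharP F r]
    (hcard : Fintype.card F = r ^ orderOf ((r : ℕ) : ZMod (2 * q)))
    (η : F) (hη : IsPrimitiveRoot η (2 * q))
    (i j : ℕ) (hi : i ∈ ({0, 1} : Set ℕ)) (hj : j ∈ ({0, 1} : Set ℕ)) :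
    recip F (gEpoly F q g i η) = gEpoly F q g ((i + 1) % 2) η ∧
    recip F (gDpoly F q g i η * gEpoly F q g j η) =
      gDpoly F q g ((i + 1) % 2) η * gEpoly F q g ((j + 1) % 2) η := by
  simp only [Set.mem_insert_iff, Set.mem_singleton_iff] at hi hj
  have hi2 : i < 2 := by omega
  have hj2 : j < 2 := by omega
  have hη1 : η ^ (2 * q) = 1 := hη.pow_eq_one
  have hq3 : 3 ≤ q := by omega
  have hη0 : η ≠ 0 := by
    intro h
    rw [h, zero_pow (by omega : 2 * q ≠ 0)] at hη1
    exact one_ne_zero hη1.symm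
  refine ⟨recip_gE hq hq4 hgq hg2q η hη1 hi2, ?_⟩
  have hD0 : (gDpoly F q g i η).coeff 0 ≠ 0 := by
    unfold gDpoly
    rw [coeff_zero_eq_eval_zero, eval_prod]
    refine Finset.prod_ne_zero_iff.mpr fun j' _ => ?_
    simp [sub_eq_zero, pow_ne_zero _ hη0, (pow_ne_zero _ hη0 : η ^ j' ≠ 0).symm]
  have hE0 : (gEpoly F q g j η).coeff 0 ≠ 0 := by
    unfold gEpoly
    rw [coeff_zero_eq_eval_zero, eval_prod]
    refine Finset.prod_ne_zero_iff.mpr fun j' _ => ?_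
    simp [sub_eq_zero, pow_ne_zero _ hη0, (pow_ne_zero _ hη0 : η ^ j' ≠ 0).symm]
  rw [recip_mul _ _ hD0 hE0, recip_gD hq hq4 hgq hg2q η hη1 hi2,
    recip_gE hq hq4 hgq hg2q η hη1 hj2]
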